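/- Consider $n \geq 2$ agents with states $x_i \in \mathbb{R}$ evolving by $\dot{x}_i = -w_i\,\mathrm{sign}(x_i - x_{i+1})$ (indices mod $n$) with all gains $w_i > 0$. Then there exist a finite time $t_f \geq 0$ and a value $X_f \in \mathbb{R}$ such that $x_i(t) = X_f$ for all $i$ and all $t \geq t_f$, and moreover $t_f \leq (\max_i x_i(0) - \min_i x_i(0))/(w_k + w_q)$ where $w_k, w_q$ are the two smallest gains. -/

import Mathlib

open Set


/-- A continuous function with constant derivative `c` on `Ioo a b` is affine on `Icc a b`. -/
lemma stmt6_affine {f : ℝ → ℝ} (hf : Continuous f) {a b c : ℝ} (hab : a < b)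
    (hd : ∀ t ∈ Ioo a b, HasDerivAt f c t) :
    ∀ t ∈ Icc a b, f t = f a + c * (t - a) := by
  set g : ℝ → ℝ := fun t => f t - c * t with hg
  have hgc : Continuous g := hf.sub (continuous_const.mul continuous_id)
  have hgd : ∀ t ∈ Ioo a b, HasDerivAt g 0 t := by
    intro t ht
    have h1 : HasDerivAt (fun t : ℝ => c * t) c t := by
      simpa using (hasDerivAt_id t).const_mul c
    have := (hd t ht).sub h1; rw [sub_self] at this; exact this
  have hint : interior (Icc a b) = Ioo a b := interior_Icc
  have hdiff : DifferentiableOn ℝ g (interior (Icc a b)) := by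
    rw [hint]; exact fun t ht => (hgd t ht).differentiableAt.differentiableWithinAt
  have hmono : MonotoneOn g (Icc a b) :=
    monotoneOn_of_deriv_nonneg (convex_Icc a b) hgc.continuousOn hdiff
      (by rw [hint]; intro t ht; simp [(hgd t ht).deriv])
  have hanti : AntitoneOn g (Icc a b) :=
    antitoneOn_of_deriv_nonpos (convex_Icc a b) hgc.continuousOn hdiff
      (by rw [hint]; intro t ht; simp [(hgd t ht).deriv])
  intro t ht
  have ha : a ∈ Icc a b := ⟨le_refl a, hab.le⟩
  have h1 := hmono ha ht ht.1
  have h2 := hanti ha ht ht.1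
  have heq : g t = g a := le_antisymm h2 h1
  simp only [hg] at heq
  have hexp : c * (t - a) = c * t - c * a := by ring
  linarith

lemma stmt6_eps_free {S : Set ℝ} (hS : S.Finite) (t : ℝ) :
    ∃ ε > (0:ℝ), ∀ z ∈ Ioo t (t + ε), z ∉ S := by
  classical
  by_cases h : (hS.toFinset.filter (fun z => t < z)).Nonempty
  · set F := hS.toFinset.filter (fun z => t < z) with hF
    refine ⟨F.min' h - t, ?_, ?_⟩
    · have : t < F.min' h := (Finset.mem_filter.1 (F.min'_mem h)).2
      linarith
    · intro z hz hzS
      have hzF : z ∈ F := Finset.mem_filter.2 ⟨hS.mem_toFinset.2 hzS, hz.1⟩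
      have h1 := F.min'_le z hzF
      have h2 := hz.2
      linarith
  · exact ⟨1, one_pos, fun z hz hzS =>
      h ⟨z, Finset.mem_filter.2 ⟨hS.mem_toFinset.2 hzS, hz.1⟩⟩⟩

open Fin.CommRing in
lemma stmt6_cyclic {n : ℕ} [NeZero n] (P : Fin n → Prop)
    (h : ∀ i, P i → P (i + 1)) {i0 : Fin n} (h0 : P i0) : ∀ j, P j := by
  have key : ∀ m : ℕ, P (i0 + m) := by
    intro m; induction m with
    | zero => simpa using h0
    | succ m ih =>
      have h2 := h _ ih
      have h3 : i0 + (m : Fin n) + 1 = i0 + ((m + 1 : ℕ) : Fin n) := by push_cast; ring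
      rwa [h3] at h2
  intro j
  have h4 := key ((j - i0 : Fin n) : ℕ)
  have h5 : i0 + (j - i0) = j := by ring
  rwa [Fin.cast_val_eq_self, h5] at h4

lemma stmt6_two_smallest {n : ℕ} {w : Fin n → ℝ} {k q : Fin n}
    (hsmall : ∀ j, j ≠ k → j ≠ q → w k ≤ w j ∧ w q ≤ w j)
    {i j : Fin n} (hij : i ≠ j) : w k + w q ≤ w i + w j := by
  by_cases hik : i = k
  · subst hik
    by_cases hjq : j = q
    · subst hjq; exact le_rfl
    · have := (hsmall j (Ne.symm hij) hjq).2; linarith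
  · by_cases hiq : i = q
    · subst hiq
      by_cases hjk : j = k
      · subst hjk; linarith
      · have := (hsmall j hjk (Ne.symm hij)).1; linarith
    · have hi := hsmall i hik hiq
      by_cases hjk : j = k
      · subst hjk; linarith [hi.2]
      · by_cases hjq : j = q
        · subst hjq; linarith [hi.1]
        · have hj := hsmall j hjk hjq; linarith [hi.1, hj.2]

lemma stmt6_zero_between {g : ℝ → ℝ} (hg : Continuous g) {z1 z2 : ℝ}
    (h1 : g z1 < 0) (h2 : 0 < g z2) : ∃ y ∈ uIcc z1 z2, g y = 0 := by
  have hmem : (0:ℝ) ∈ uIcc (g z1) (g z2) := by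
    rw [Set.mem_uIcc]; left; exact ⟨h1.le, h2.le⟩
  obtain ⟨y, hy, hgy⟩ := intermediate_value_uIcc hg.continuousOn hmem
  exact ⟨y, hy, hgy⟩

lemma stmt6_le_endpoint {g : ℝ → ℝ} (hg : Continuous g) {a b : ℝ} (hab : a < b)
    (h : ∀ t ∈ Ioo a b, g t ≤ 0) : g b ≤ 0 := by
  have h1 : closure (Ioo a b) ⊆ {t | g t ≤ 0} :=
    (isClosed_le hg continuous_const).closure_subset_iff.2 h
  have hb : b ∈ closure (Ioo a b) := by
    rw [closure_Ioo hab.ne]; exact ⟨hab.le, le_rfl⟩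
  exact h1 hb

lemma stmt6_real_induction {G : Set ℝ} (hG : IsClosed G) {T0 : ℝ} (hT0 : T0 ∈ G)
    (hext : ∀ t, t ∈ G → T0 ≤ t → ∃ ε > (0:ℝ), Ioo t (t + ε) ⊆ G) :
    Ici T0 ⊆ G := by
  intro t' ht'
  set K := G ∩ Icc T0 t' with hK
  have hKne : K.Nonempty := ⟨T0, hT0, le_rfl, ht'⟩
  have hKb : BddAbove K := ⟨t', fun z hz => hz.2.2⟩
  have hKc : IsClosed K := hG.inter isClosed_Icc
  have hu := hKc.csSup_mem hKne hKb
  rcases eq_or_lt_of_le hu.2.2 with heq | hlt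
  · rw [← heq]; exact hu.1
  · exfalso
    obtain ⟨ε, hε, hsub⟩ := hext _ hu.1 hu.2.1
    set u := sSup K with hudef
    set z := min (u + ε/2) ((u + t')/2) with hz
    have hz1 : u < z := lt_min (by linarith) (by linarith)
    have hz2 : z < u + ε := lt_of_le_of_lt (min_le_left _ _) (by linarith)
    have hz3 : z ≤ t' := le_trans (min_le_right _ _) (by linarith)
    have hzK : z ∈ K := ⟨hsub ⟨hz1, hz2⟩, le_trans hu.2.1 hz1.le, hz3⟩
    have := le_csSup hKb hzK
    linarith

/-- Sign constancy on an order-connected set where `g` doesn't vanish. -/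
lemma stmt6_sign_one_sided {g : ℝ → ℝ} (hg : Continuous g) {I : Set ℝ}
    (hI : ∀ z1 ∈ I, ∀ z2 ∈ I, uIcc z1 z2 ⊆ I)
    (hne : ∀ z ∈ I, g z ≠ 0) {z0 : ℝ} (hz0 : z0 ∈ I) :
    (∀ z ∈ I, 0 < g z) ∨ (∀ z ∈ I, g z < 0) := by
  rcases (hne z0 hz0).lt_or_gt with hneg | hpos
  · right; intro z hz
    by_contra hc
    push_neg at hc
    have hp : 0 < g z := lt_of_le_of_ne hc (Ne.symm (hne z hz))
    obtain ⟨y, hy, hgy⟩ := stmt6_zero_between hg hneg hp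
    exact hne y (hI z0 hz0 z hz hy) hgy
  · left; intro z hz
    by_contra hc
    push_neg at hc
    have hn : g z < 0 := lt_of_le_of_ne hc (hne z hz)
    obtain ⟨y, hy, hgy⟩ := stmt6_zero_between hg hn hpos
    exact hne y (hI z hz z0 hz0 hy) hgy


section Stmt6Core
variable {n : ℕ} [NeZero n] {x : Fin n → ℝ → ℝ} {w : Fin n → ℝ} {S : Set ℝ}

/-- No takeoff: a trajectory can't leave a coincidence point at a nondifferentiable-free time. -/
lemma stmt6_no_takeoff
    (hw : ∀ i, 0 < w i) (hcont : ∀ i, Continuous (x i))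
    (hdyn : ∀ i, ∀ t ∈ Set.Ici (0:ℝ) \ S,
      HasDerivAt (x i) (-(w i) * Real.sign (x i t - x (i + 1) t)) t)
    (i : Fin n) {p u : ℝ} (hp : p ∈ Set.Ici (0:ℝ) \ S) (hpu : p < u)
    (hfree : ∀ z ∈ Ioc p u, z ∈ Set.Ici (0:ℝ) \ S)
    (h0 : x i p = x (i + 1) p)
    (hne : ∀ z ∈ Ioc p u, x i z ≠ x (i + 1) z) : False := by
  set g : ℝ → ℝ := fun z => x i z - x (i + 1) z with hg
  have hgc : Continuous g := (hcont i).sub (hcont (i + 1))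
  have hne' : ∀ z ∈ Ioc p u, g z ≠ 0 := fun z hz => sub_ne_zero_of_ne (hne z hz)
  have hsgn : ∃ s : ℝ, (s = 1 ∨ s = -1) ∧ ∀ z ∈ Ioo p u, Real.sign (g z) = s := by
    rcases stmt6_sign_one_sided hgc
        (fun z1 h1 z2 h2 => (Set.ordConnected_Ioc).uIcc_subset h1 h2) hne'
        (show u ∈ Ioc p u from ⟨hpu, le_rfl⟩) with hpos | hneg
    · exact ⟨1, Or.inl rfl, fun z hz => Real.sign_of_pos (hpos z ⟨hz.1, hz.2.le⟩)⟩
    · exact ⟨-1, Or.inr rfl, fun z hz => Real.sign_of_neg (hneg z ⟨hz.1, hz.2.le⟩)⟩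
  obtain ⟨s, hs, hsgn⟩ := hsgn
  have hderiv : ∀ z ∈ Ioo p u, HasDerivAt (x i) (-(w i) * s) z := by
    intro z hz
    have h1 := hdyn i z (hfree z ⟨hz.1, hz.2.le⟩)
    rwa [show x i z - x (i + 1) z = g z from rfl, hsgn z hz] at h1
  have haff := stmt6_affine (hcont i) hpu hderiv
  -- derivative of x i at p is 0
  have hd0 : HasDerivAt (x i) 0 p := by
    have h1 := hdyn i p hp
    rw [show x i p - x (i + 1) p = 0 by rw [h0]; ring, Real.sign_zero, mul_zero] at h1
    exact h1
  -- affine comparison function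
  have hA : HasDerivWithinAt (x i) (-(w i) * s) (Icc p u) p := by
    have hA0 : HasDerivAt (fun z : ℝ => x i p + (-(w i) * s) * (z - p)) (-(w i) * s) p := by
      simpa using (((hasDerivAt_id p).sub_const p).const_mul (-(w i) * s)).const_add (x i p)
    refine (hA0.hasDerivWithinAt).congr (fun y hy => (haff y hy)) ?_
    simp
  have hud : UniqueDiffWithinAt ℝ (Icc p u) p := (uniqueDiffOn_Icc hpu) p ⟨le_rfl, hpu.le⟩
  have h1 := (hd0.hasDerivWithinAt (s := Icc p u)).derivWithin hud
  have h2 := hA.derivWithin hud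
  have h3 : (0:ℝ) = -(w i) * s := h1.symm.trans h2
  have hwi := hw i
  rcases hs with rfl | rfl <;> simp at h3 <;> linarith

/-- No landing: mirror image. -/
lemma stmt6_no_landing
    (hw : ∀ i, 0 < w i) (hcont : ∀ i, Continuous (x i))
    (hdyn : ∀ i, ∀ t ∈ Set.Ici (0:ℝ) \ S,
      HasDerivAt (x i) (-(w i) * Real.sign (x i t - x (i + 1) t)) t)
    (i : Fin n) {p u : ℝ} (hu : u ∈ Set.Ici (0:ℝ) \ S) (hpu : p < u)
    (hfree : ∀ z ∈ Ico p u, z ∈ Set.Ici (0:ℝ) \ S)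
    (h0 : x i u = x (i + 1) u)
    (hne : ∀ z ∈ Ico p u, x i z ≠ x (i + 1) z) : False := by
  set g : ℝ → ℝ := fun z => x i z - x (i + 1) z with hg
  have hgc : Continuous g := (hcont i).sub (hcont (i + 1))
  have hne' : ∀ z ∈ Ico p u, g z ≠ 0 := fun z hz => sub_ne_zero_of_ne (hne z hz)
  have hsgn : ∃ s : ℝ, (s = 1 ∨ s = -1) ∧ ∀ z ∈ Ioo p u, Real.sign (g z) = s := by
    rcases stmt6_sign_one_sided hgc
        (fun z1 h1 z2 h2 => (Set.ordConnected_Ico).uIcc_subset h1 h2) hne'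
        (show p ∈ Ico p u from ⟨le_rfl, hpu⟩) with hpos | hneg
    · exact ⟨1, Or.inl rfl, fun z hz => Real.sign_of_pos (hpos z ⟨hz.1.le, hz.2⟩)⟩
    · exact ⟨-1, Or.inr rfl, fun z hz => Real.sign_of_neg (hneg z ⟨hz.1.le, hz.2⟩)⟩
  obtain ⟨s, hs, hsgn⟩ := hsgn
  have hderiv : ∀ z ∈ Ioo p u, HasDerivAt (x i) (-(w i) * s) z := by
    intro z hz
    have h1 := hdyn i z (hfree z ⟨hz.1.le, hz.2⟩)
    rwa [show x i z - x (i + 1) z = g z from rfl, hsgn z hz] at h1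
  have haff := stmt6_affine (hcont i) hpu hderiv
  have hd0 : HasDerivAt (x i) 0 u := by
    have h1 := hdyn i u hu
    rw [show x i u - x (i + 1) u = 0 by rw [h0]; ring, Real.sign_zero, mul_zero] at h1
    exact h1
  have hA : HasDerivWithinAt (x i) (-(w i) * s) (Icc p u) u := by
    have hA0 : HasDerivAt (fun z : ℝ => x i p + (-(w i) * s) * (z - p)) (-(w i) * s) u := by
      simpa using (((hasDerivAt_id u).sub_const p).const_mul (-(w i) * s)).const_add (x i p)
    refine (hA0.hasDerivWithinAt).congr (fun y hy => (haff y hy)) ?_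
    exact haff u ⟨hpu.le, le_rfl⟩
  have hud : UniqueDiffWithinAt ℝ (Icc p u) u := (uniqueDiffOn_Icc hpu) u ⟨hpu.le, le_rfl⟩
  have h1 := (hd0.hasDerivWithinAt (s := Icc p u)).derivWithin hud
  have h2 := hA.derivWithin hud
  have h3 : (0:ℝ) = -(w i) * s := h1.symm.trans h2
  have hwi := hw i
  rcases hs with rfl | rfl <;> simp at h3 <;> linarith

/-- On an `S`-free open interval inside `[0,∞)`, each sign is constant. -/
lemma stmt6_sign_const
    (hw : ∀ i, 0 < w i) (hcont : ∀ i, Continuous (x i))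
    (hdyn : ∀ i, ∀ t ∈ Set.Ici (0:ℝ) \ S,
      HasDerivAt (x i) (-(w i) * Real.sign (x i t - x (i + 1) t)) t)
    (i : Fin n) {a b : ℝ} (hab : a < b)
    (hfree : ∀ z ∈ Ioo a b, z ∈ Set.Ici (0:ℝ) \ S) :
    ∃ s : ℝ, ∀ t ∈ Ioo a b, Real.sign (x i t - x (i + 1) t) = s := by
  set g : ℝ → ℝ := fun z => x i z - x (i + 1) z with hg
  have hgc : Continuous g := (hcont i).sub (hcont (i + 1))
  by_cases hz : ∃ t0 ∈ Ioo a b, g t0 = 0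
  · obtain ⟨t0, ht0, hgt0⟩ := hz
    refine ⟨0, fun t ht => ?_⟩
    suffices h : g t = 0 by
      rw [show x i t - x (i + 1) t = g t from rfl, h, Real.sign_zero]
    by_contra hgt
    rcases lt_trichotomy t0 t with hlt | heq | hgt'
    · -- take the last zero before t
      set Z := {z | z ∈ Icc t0 t ∧ g z = 0} with hZ
      have hZne : Z.Nonempty := ⟨t0, ⟨le_rfl, hlt.le⟩, hgt0⟩
      have hZbdd : BddAbove Z := ⟨t, fun z hz => hz.1.2⟩
      have hZc : IsClosed Z := by
        have : Z = Icc t0 t ∩ g ⁻¹' {0} := by ext z; simp [hZ, Set.mem_inter_iff]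
        rw [this]
        exact isClosed_Icc.inter (isClosed_singleton.preimage hgc)
      have hpZ := hZc.csSup_mem hZne hZbdd
      set p := sSup Z with hp
      have hpt : p < t := lt_of_le_of_ne hpZ.1.2 (fun h => hgt (h ▸ hpZ.2))
      have hpmem : p ∈ Ioo a b := ⟨lt_of_lt_of_le ht0.1 hpZ.1.1, lt_trans hpt ht.2⟩
      have hne2 : ∀ z ∈ Ioc p t, x i z ≠ x (i + 1) z := by
        intro z hzm hcontra
        have hzZ : z ∈ Z := ⟨⟨le_trans hpZ.1.1 hzm.1.le, hzm.2⟩, sub_eq_zero_of_eq hcontra⟩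
        exact absurd (le_csSup hZbdd hzZ) (not_le.2 hzm.1)
      exact stmt6_no_takeoff hw hcont hdyn i (hfree p hpmem) hpt
        (fun z hzm => hfree z ⟨lt_trans hpmem.1 hzm.1, lt_of_le_of_lt hzm.2 ht.2⟩)
        (by have := hpZ.2; simpa [hg, sub_eq_zero] using this) hne2
    · exact hgt (heq ▸ hgt0)
    · -- take the first zero after t
      set Z := {z | z ∈ Icc t t0 ∧ g z = 0} with hZ
      have hZne : Z.Nonempty := ⟨t0, ⟨hgt'.le, le_rfl⟩, hgt0⟩
      have hZbdd : BddBelow Z := ⟨t, fun z hz => hz.1.1⟩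
      have hZc : IsClosed Z := by
        have : Z = Icc t t0 ∩ g ⁻¹' {0} := by ext z; simp [hZ, Set.mem_inter_iff]
        rw [this]
        exact isClosed_Icc.inter (isClosed_singleton.preimage hgc)
      have hpZ := hZc.csInf_mem hZne hZbdd
      set p := sInf Z with hp
      have hpt : t < p := lt_of_le_of_ne hpZ.1.1 (fun h => hgt (h ▸ hpZ.2))
      have hpmem : p ∈ Ioo a b := ⟨lt_trans ht.1 hpt, lt_of_le_of_lt hpZ.1.2 ht0.2⟩
      have hne2 : ∀ z ∈ Ico t p, x i z ≠ x (i + 1) z := by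
        intro z hzm hcontra
        have hzZ : z ∈ Z := ⟨⟨hzm.1, le_trans hzm.2.le (hpZ.1.2)⟩, sub_eq_zero_of_eq hcontra⟩
        exact absurd (csInf_le hZbdd hzZ) (not_le.2 hzm.2)
      exact stmt6_no_landing hw hcont hdyn i (hfree p hpmem) hpt
        (fun z hzm => hfree z ⟨lt_of_lt_of_le ht.1 hzm.1, lt_trans hzm.2 hpmem.2⟩)
        (by have := hpZ.2; simpa [hg, sub_eq_zero] using this) hne2
  · push_neg at hz
    rcases stmt6_sign_one_sided hgc
        (fun z1 h1 z2 h2 => (Set.ordConnected_Ioo).uIcc_subset h1 h2) hz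
        (show (a + b)/2 ∈ Ioo a b by constructor <;> [linarith; linarith]) with hpos | hneg
    · exact ⟨1, fun t ht => Real.sign_of_pos (hpos t ht)⟩
    · exact ⟨-1, fun t ht => Real.sign_of_neg (hneg t ht)⟩

/-- Piece structure: constant signs and affine trajectories on an `S`-free piece. -/
lemma stmt6_piece
    (hw : ∀ i, 0 < w i) (hcont : ∀ i, Continuous (x i))
    (hdyn : ∀ i, ∀ t ∈ Set.Ici (0:ℝ) \ S,
      HasDerivAt (x i) (-(w i) * Real.sign (x i t - x (i + 1) t)) t)
    {a b : ℝ} (hab : a < b)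
    (hfree : ∀ z ∈ Ioo a b, z ∈ Set.Ici (0:ℝ) \ S) (i : Fin n) :
    ∃ s : ℝ, (∀ t ∈ Ioo a b, Real.sign (x i t - x (i + 1) t) = s) ∧
      (∀ t ∈ Icc a b, x i t = x i a + (-(w i) * s) * (t - a)) := by
  obtain ⟨s, hs⟩ := stmt6_sign_const hw hcont hdyn i hab hfree
  refine ⟨s, hs, stmt6_affine (hcont i) hab (fun t ht => ?_)⟩
  have h1 := hdyn i t (hfree t ht)
  rwa [hs t ht] at h1

/-- Consensus persists through each piece. -/
lemma stmt6_piece_persist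
    (hw : ∀ i, 0 < w i) (hcont : ∀ i, Continuous (x i))
    (hdyn : ∀ i, ∀ t ∈ Set.Ici (0:ℝ) \ S,
      HasDerivAt (x i) (-(w i) * Real.sign (x i t - x (i + 1) t)) t)
    {a b : ℝ} (hab : a < b)
    (hfree : ∀ z ∈ Ioo a b, z ∈ Set.Ici (0:ℝ) \ S)
    (hcons : ∀ p1 p2 : Fin n, x p1 a = x p2 a) :
    ∀ t ∈ Icc a b, ∀ p, x p t = x p a := by
  choose s hsgn haff using stmt6_piece hw hcont hdyn hab hfree
  set σ : Fin n → ℝ := fun i => -(w i) * s i with hσ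
  set m : ℝ := (a + b) / 2 with hm
  have hmm : m ∈ Ioo a b := by constructor <;> [simp only [hm]; simp only [hm]] <;> linarith
  -- value of difference at any point of the piece
  have hgval : ∀ (i : Fin n), ∀ t ∈ Icc a b,
      x i t - x (i + 1) t = (σ i - σ (i + 1)) * (t - a) := by
    intro i t ht
    rw [haff i t ht, haff (i + 1) t ht, hcons i (i + 1)]
    ring
  -- all slopes are equal
  have hall : ∀ i j : Fin n, σ i = σ j := by
    by_contra hne
    push_neg at hne
    obtain ⟨i', j', hij'⟩ := hne
    obtain ⟨i0, _, hi0⟩ := Finset.exists_max_image Finset.univ σ Finset.univ_nonempty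
    obtain ⟨j0, _, hj0⟩ := Finset.exists_min_image Finset.univ σ Finset.univ_nonempty
    have hstrict : σ j0 < σ i0 := by
      rcases lt_or_ge (σ j0) (σ i0) with h | h
      · exact h
      · exfalso
        have h1 : ∀ p, σ p = σ i0 := fun p =>
          le_antisymm (hi0 p (Finset.mem_univ p))
            (le_trans h (hj0 p (Finset.mem_univ p)))
        exact hij' ((h1 i').trans (h1 j').symm)
    -- find a max element whose successor is not max
    have hmaxstep : ∃ i1 : Fin n, σ i1 = σ i0 ∧ σ (i1 + 1) ≠ σ i0 := by
      by_contra hc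
      push_neg at hc
      have := stmt6_cyclic (fun p => σ p = σ i0) (fun p hp => hc p hp) rfl j0
      exact absurd this (ne_of_lt hstrict)
    obtain ⟨i1, hi1, hi1'⟩ := hmaxstep
    have hi1lt : σ (i1 + 1) < σ i1 :=
      hi1 ▸ lt_of_le_of_ne (hi0 _ (Finset.mem_univ _)) hi1'
    have hs1 : s i1 = 1 := by
      have h1 : 0 < x i1 m - x (i1 + 1) m := by
        rw [hgval i1 m ⟨hmm.1.le, hmm.2.le⟩]
        have : 0 < m - a := by simp only [hm]; linarith
        nlinarith
      have h2 := hsgn i1 m hmm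
      rw [Real.sign_of_pos h1] at h2
      exact h2.symm
    have hσi1 : σ i1 = -(w i1) := by rw [hσ]; simp [hs1]
    -- min side
    have hminstep : ∃ j1 : Fin n, σ j1 = σ j0 ∧ σ (j1 + 1) ≠ σ j0 := by
      by_contra hc
      push_neg at hc
      have := stmt6_cyclic (fun p => σ p = σ j0) (fun p hp => hc p hp) rfl i0
      exact absurd this.symm (ne_of_lt hstrict)
    obtain ⟨j1, hj1, hj1'⟩ := hminstep
    have hj1lt : σ j1 < σ (j1 + 1) := by
      rw [hj1]
      exact lt_of_le_of_ne (hj0 _ (Finset.mem_univ _)) (fun h => hj1' h.symm)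
    have hs2 : s j1 = -1 := by
      have h1 : x j1 m - x (j1 + 1) m < 0 := by
        rw [hgval j1 m ⟨hmm.1.le, hmm.2.le⟩]
        have : 0 < m - a := by simp only [hm]; linarith
        nlinarith
      have h2 := hsgn j1 m hmm
      rw [Real.sign_of_neg h1] at h2
      exact h2.symm
    have hσj1 : σ j1 = w j1 := by rw [hσ]; simp [hs2]
    have h1 : σ j1 ≤ σ i1 := hj1 ▸ hi1 ▸ hstrict.le
    have h2 := hw i1
    have h3 := hw j1
    rw [hσj1, hσi1] at h1
    linarith
  -- hence all signs zero and trajectories constant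
  intro t ht p
  have hzero : σ p = 0 := by
    have h1 : x p m - x (p + 1) m = 0 := by
      rw [hgval p m ⟨hmm.1.le, hmm.2.le⟩, hall p (p + 1)]; ring
    have h2 := hsgn p m hmm
    rw [h1, Real.sign_zero] at h2
    rw [hσ]; simp [← h2]
  have := haff p t ht
  rw [show -(w p) * s p = σ p from rfl, hzero] at this
  simpa using this


/-- Quantitative decay of the spread across a piece without consensus at its right end. -/
lemma stmt6_piece_decay
    (hw : ∀ i, 0 < w i) (hcont : ∀ i, Continuous (x i))
    (hdyn : ∀ i, ∀ t ∈ Set.Ici (0:ℝ) \ S,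
      HasDerivAt (x i) (-(w i) * Real.sign (x i t - x (i + 1) t)) t)
    (k q : Fin n)
    (hsmall : ∀ j, j ≠ k → j ≠ q → w k ≤ w j ∧ w q ≤ w j)
    {a b : ℝ} (hab : a < b)
    (hfree : ∀ z ∈ Ioo a b, z ∈ Set.Ici (0:ℝ) \ S)
    (hnc : ¬ ∀ p1 p2 : Fin n, x p1 b = x p2 b) :
    ∃ i j : Fin n, ∀ p1 p2 : Fin n,
      x p1 b - x p2 b ≤ (x i a - x j a) - (w k + w q) * (b - a) := by
  choose s hsgn haff using stmt6_piece hw hcont hdyn hab hfree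
  obtain ⟨i0, _, hi0⟩ := Finset.exists_max_image Finset.univ (fun p => x p b)
    Finset.univ_nonempty
  obtain ⟨j0, _, hj0⟩ := Finset.exists_min_image Finset.univ (fun p => x p b)
    Finset.univ_nonempty
  simp only [Finset.mem_univ, forall_true_left] at hi0 hj0
  -- closure property at b: if the sign isn't +1, the successor is at least as large at b
  have hclosmax : ∀ p : Fin n, s p ≠ 1 → x p b ≤ x (p + 1) b := by
    intro p hp
    have hle : ∀ t ∈ Ioo a b, x p t - x (p + 1) t ≤ 0 := by
      intro t ht
      rcases lt_trichotomy (x p t - x (p + 1) t) 0 with h | h | h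
      · exact h.le
      · exact h.le
      · exact absurd ((hsgn p t ht).symm.trans (Real.sign_of_pos h)) hp
    have := stmt6_le_endpoint ((hcont p).sub (hcont (p + 1))) hab hle
    simp only [Pi.sub_apply] at this
    linarith
  have hclosmin : ∀ p : Fin n, s p ≠ -1 → x (p + 1) b ≤ x p b := by
    intro p hp
    have hle : ∀ t ∈ Ioo a b, x (p + 1) t - x p t ≤ 0 := by
      intro t ht
      rcases lt_trichotomy (x p t - x (p + 1) t) 0 with h | h | h
      · exact absurd ((hsgn p t ht).symm.trans (Real.sign_of_neg h)) hp
      · linarith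
      · linarith
    have := stmt6_le_endpoint ((hcont (p + 1)).sub (hcont p)) hab hle
    simp only [Pi.sub_apply] at this
    linarith
  -- find a maximizer with sign +1
  have hex1 : ∃ i : Fin n, x i b = x i0 b ∧ s i = 1 := by
    by_contra hc
    push_neg at hc
    have hstep : ∀ p : Fin n, x p b = x i0 b → x (p + 1) b = x i0 b := by
      intro p hp
      have h1 := hclosmax p (hc p hp)
      exact le_antisymm (hi0 (p + 1)) (by rw [← hp]; exact h1)
    have hall := stmt6_cyclic (fun p => x p b = x i0 b) hstep rfl
    exact hnc (fun p1 p2 => (hall p1).trans (hall p2).symm)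
  have hex2 : ∃ j : Fin n, x j b = x j0 b ∧ s j = -1 := by
    by_contra hc
    push_neg at hc
    have hstep : ∀ p : Fin n, x p b = x j0 b → x (p + 1) b = x j0 b := by
      intro p hp
      have h1 := hclosmin p (hc p hp)
      exact le_antisymm (by rw [← hp]; exact h1) (hj0 (p + 1))
    have hall := stmt6_cyclic (fun p => x p b = x j0 b) hstep rfl
    exact hnc (fun p1 p2 => (hall p1).trans (hall p2).symm)
  obtain ⟨i, hib, hsi⟩ := hex1
  obtain ⟨j, hjb, hsj⟩ := hex2
  have hij : i ≠ j := by
    intro h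
    apply hnc
    intro p1 p2
    have h1 : x i0 b ≤ x j0 b := by rw [← hib, h, hjb]
    exact le_antisymm (le_trans (hi0 p1) (le_trans h1 (hj0 p2)))
      (le_trans (hi0 p2) (le_trans h1 (hj0 p1)))
  have hbmem : b ∈ Icc a b := ⟨hab.le, le_rfl⟩
  have haffi := haff i b hbmem
  have haffj := haff j b hbmem
  rw [hsi] at haffi
  rw [hsj] at haffj
  have hts := stmt6_two_smallest hsmall hij
  refine ⟨i, j, fun p1 p2 => ?_⟩
  have h1 : x p1 b ≤ x i b := hib ▸ hi0 p1
  have h2 : x j b ≤ x p2 b := hjb ▸ hj0 p2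
  have hba : 0 ≤ b - a := by linarith
  nlinarith [mul_le_mul_of_nonneg_right hts hba]


end Stmt6Core

/-- Theorem 1: finite-time heterogeneous cyclic pursuit with positive gains reaches
    consensus at or before (max − min)/(w_k + w_q), where w_k, w_q are the two smallest gains. -/
theorem stmt_6 (n : ℕ) [NeZero n] (hn : 2 ≤ n)
    (x : Fin n → ℝ → ℝ) (w : Fin n → ℝ) (hw : ∀ i, 0 < w i)
    (hcont : ∀ i, Continuous (x i))
    (S : Set ℝ) (hS : S.Finite)
    (hdyn : ∀ i, ∀ t ∈ Set.Ici (0 : ℝ) \ S,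
      HasDerivAt (x i) (-(w i) * Real.sign (x i t - x (i + 1) t)) t)
    (k q : Fin n) (hkq : k ≠ q)
    (hsmall : ∀ j, j ≠ k → j ≠ q → w k ≤ w j ∧ w q ≤ w j)
    (Xm XM : ℝ)
    (hXm : IsLeast (Set.range fun i => x i 0) Xm)
    (hXM : IsGreatest (Set.range fun i => x i 0) XM) :
    ∃ tf Xf : ℝ, 0 ≤ tf ∧ tf ≤ (XM - Xm) / (w k + w q) ∧
      ∀ i, ∀ t, tf ≤ t → x i t = Xf := by
  have hcpos : 0 < w k + w q := add_pos (hw k) (hw q)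
  obtain ⟨ik, hik⟩ := hXM.1
  have hbound : ∀ i, Xm ≤ x i 0 ∧ x i 0 ≤ XM :=
    fun i => ⟨hXm.2 ⟨i, rfl⟩, hXM.2 ⟨i, rfl⟩⟩
  have hD0 : 0 ≤ XM - Xm := by
    have h1 := (hbound ik).1
    simp only at hik
    linarith [hik ▸ h1]
  set T : ℝ := (XM - Xm) / (w k + w q) with hT
  have hT0 : 0 ≤ T := div_nonneg hD0 hcpos.le
  set φ : ℝ → ℝ := fun t => max 0 ((XM - Xm) - (w k + w q) * t) with hφ
  set G : Set ℝ := {t | ∀ p1 p2 : Fin n, x p1 t - x p2 t ≤ φ t} with hG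
  have hGclosed : IsClosed G := by
    have hGi : G = ⋂ p1, ⋂ p2, {t | x p1 t - x p2 t ≤ φ t} := by
      ext t; simp [hG, Set.mem_iInter]
    rw [hGi]
    refine isClosed_iInter fun p1 => isClosed_iInter fun p2 => isClosed_le
      ((hcont p1).sub (hcont p2)) (continuous_const.max ?_)
    exact continuous_const.sub (continuous_const.mul continuous_id)
  have hG0 : (0:ℝ) ∈ G := by
    intro p1 p2
    have h1 := (hbound p1).2
    have h2 := (hbound p2).1
    have h3 : (XM - Xm) - (w k + w q) * 0 ≤ φ 0 := le_max_right _ _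
    simp only [mul_zero] at h3
    linarith
  have hGext : ∀ t, t ∈ G → (0:ℝ) ≤ t → ∃ ε > (0:ℝ), Ioo t (t + ε) ⊆ G := by
    intro t htG ht0
    obtain ⟨ε, hε, hfreeS⟩ := stmt6_eps_free hS t
    refine ⟨ε, hε, fun u hu => ?_⟩
    by_cases hcons : ∀ p1 p2 : Fin n, x p1 u = x p2 u
    · intro p1 p2
      rw [hcons p1 p2, sub_self]
      exact le_max_left _ _
    · have hfree' : ∀ z ∈ Ioo t u, z ∈ Set.Ici (0:ℝ) \ S := fun z hz =>
        ⟨le_trans ht0 hz.1.le, hfreeS z ⟨hz.1, lt_trans hz.2 hu.2⟩⟩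
      obtain ⟨i, j, hdec⟩ := stmt6_piece_decay hw hcont hdyn k q hsmall hu.1 hfree' hcons
      intro p1 p2
      have h1 := hdec p1 p2
      have h2 := htG i j
      have h3 : φ t - (w k + w q) * (u - t) ≤ φ u := by
        rcases le_total ((XM - Xm) - (w k + w q) * t) 0 with h | h
        · have h4 : φ t = 0 := max_eq_left h
          have h5 : (0:ℝ) ≤ φ u := le_max_left _ _
          have h6 : 0 ≤ (w k + w q) * (u - t) :=
            mul_nonneg hcpos.le (by linarith [hu.1])
          linarith
        · have h4 : φ t = (XM - Xm) - (w k + w q) * t := max_eq_right h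
          have h5 : (XM - Xm) - (w k + w q) * u ≤ φ u := le_max_right _ _
          have h7 : (w k + w q) * u = (w k + w q) * t + (w k + w q) * (u - t) := by ring
          linarith
      linarith
  have hTG : T ∈ G := stmt6_real_induction hGclosed hG0 hGext hT0
  have hφT : φ T = 0 := by
    have h1 : (w k + w q) * T = XM - Xm := by
      rw [hT]; field_simp
    simp [hφ, h1]
  have hTcons : ∀ p1 p2 : Fin n, x p1 T = x p2 T := by
    intro p1 p2
    have h1 := hTG p1 p2
    have h2 := hTG p2 p1
    rw [hφT] at h1 h2
    linarith
  -- persistence after T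
  set G2 : Set ℝ := Ici T ∩ {t | ∀ p : Fin n, x p t = x p T} with hG2
  have hG2closed : IsClosed G2 := by
    refine isClosed_Ici.inter ?_
    have : {t | ∀ p : Fin n, x p t = x p T} = ⋂ p, {t | x p t = x p T} := by
      ext t; simp [Set.mem_iInter]
    rw [this]
    exact isClosed_iInter fun p => isClosed_eq (hcont p) continuous_const
  have hG2T : T ∈ G2 := ⟨Set.self_mem_Ici, fun p => rfl⟩
  have hG2ext : ∀ t, t ∈ G2 → T ≤ t → ∃ ε > (0:ℝ), Ioo t (t + ε) ⊆ G2 := by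
    intro t htG2 hTt
    obtain ⟨ε, hε, hfreeS⟩ := stmt6_eps_free hS t
    refine ⟨ε, hε, fun u hu => ?_⟩
    have hfree' : ∀ z ∈ Ioo t u, z ∈ Set.Ici (0:ℝ) \ S := fun z hz =>
      ⟨le_trans hT0 (le_trans hTt hz.1.le), hfreeS z ⟨hz.1, lt_trans hz.2 hu.2⟩⟩
    have hconst : ∀ p1 p2 : Fin n, x p1 t = x p2 t := fun p1 p2 =>
      (htG2.2 p1).trans ((hTcons p1 p2).trans (htG2.2 p2).symm)
    have hper := stmt6_piece_persist hw hcont hdyn hu.1 hfree' hconst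
    refine ⟨Set.mem_Ici.2 (le_trans (Set.mem_Ici.1 htG2.1) hu.1.le), fun p => ?_⟩
    rw [hper u ⟨hu.1.le, le_rfl⟩ p]
    exact htG2.2 p
  have hG2all := stmt6_real_induction hG2closed hG2T hG2ext
  refine ⟨T, x k T, hT0, le_rfl, fun i t ht => ?_⟩
  have h1 := (hG2all ht).2 i
  rw [h1]
  exact hTcons i k
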